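/- Under the same hypotheses as the previous statement (x_{k+1} the proximal subproblem minimizer with step s_k ≤ 1/L and KKT multipliers λ ∈ Δ^m supported on the active index set), for every z ∈ ℝ^n: min_i (F_i(x_k) − F_i(z)) − min_i (F_i(x_{k+1}) − F_i(z)) ≥ −(1/(2s_k))[2⟨y_k − x_{k+1}, y_k − x_k⟩ + ‖x_{k+1} − y_k‖²]. -/

import Mathlib

open Set Filter Topology intervalIntegral

section helpers

variable {E : Type*} [NormedAddCommGroup E] [InnerProductSpace ℝ E] [CompleteSpace E]

private lemma line_hasDerivAt (f : E → ℝ) (y d : E) (t : ℝ) (f't : E)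
    (hf : HasGradientAt f f't (y + t • d)) :
    HasDerivAt (fun t : ℝ => f (y + t • d)) (inner ℝ f't d : ℝ) t := by
  have h1 : HasDerivAt (fun t : ℝ => y + t • d) d t := by
    simpa using ((hasDerivAt_id t).smul_const d).const_add y
  have h2 := hf.hasFDerivAt.comp_hasDerivAt t h1
  simp at h2; exact h2

/-- gradient inequality for convex functions -/
private lemma convex_grad_ineq (f : E → ℝ) (f'y : E) (y x : E)
    (hconv : ConvexOn ℝ Set.univ f) (hf : HasGradientAt f f'y y) :
    f y + (inner ℝ f'y (x - y) : ℝ) ≤ f x := by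
  set d := x - y with hd
  have hder : HasDerivAt (fun t : ℝ => f (y + t • d)) (inner ℝ f'y d : ℝ) 0 :=
    line_hasDerivAt f y d 0 f'y (by simpa using hf)
  have hslope := hasDerivAt_iff_tendsto_slope.1 hder
  have hsub : Set.Ioi (0 : ℝ) ⊆ {t : ℝ | t ≠ 0} := fun t ht => ne_of_gt ht
  have hT : Tendsto (slope (fun t : ℝ => f (y + t • d)) 0) (𝓝[>] (0 : ℝ))
      (𝓝 (inner ℝ f'y d : ℝ)) := hslope.mono_left (nhdsWithin_mono _ hsub)
  have hle : (inner ℝ f'y d : ℝ) ≤ f x - f y := by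
    refine le_of_tendsto hT ?_
    filter_upwards [Ioc_mem_nhdsGT_of_mem (Set.left_mem_Ico.2 one_pos)] with t ht
    have ht0 : 0 < t := ht.1
    have ht1 : t ≤ 1 := ht.2
    have hcomb : y + t • d = (1 - t) • y + t • x := by
      rw [hd]; module
    have hcv := hconv.2 (Set.mem_univ y) (Set.mem_univ x)
      (by linarith : (0:ℝ) ≤ 1 - t) ht0.le (by ring)
    rw [← hcomb] at hcv
    simp only [smul_eq_mul] at hcv
    have hslope_le : slope (fun t : ℝ => f (y + t • d)) 0 t ≤ f x - f y := by
      rw [slope_def_field]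
      simp only [zero_smul, add_zero, sub_zero]
      rw [div_le_iff₀ ht0]
      calc f (y + t • d) - f y ≤ (1 - t) * f y + t * f x - f y := by linarith
        _ = (f x - f y) * t := by ring
    exact hslope_le
  have : (inner ℝ f'y d : ℝ) = inner ℝ f'y (x - y) := by rw [hd]
  linarith [hle]

/-- descent lemma -/
private lemma descent_lemma (f : E → ℝ) (f' : E → E) (L : ℝ) (hL : 0 < L)
    (hf : ∀ x, HasGradientAt f (f' x) x)
    (hlip : ∀ u v, ‖f' u - f' v‖ ≤ L * ‖u - v‖) (x y : E) :
    f x ≤ f y + (inner ℝ (f' y) (x - y) : ℝ) + L / 2 * ‖x - y‖ ^ 2 := by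
  set d := x - y with hd
  have hcontf' : Continuous f' := by
    have : LipschitzWith L.toNNReal f' := by
      apply LipschitzWith.of_dist_le_mul
      intro u v
      rw [dist_eq_norm, dist_eq_norm]
      simpa [Real.coe_toNNReal L hL.le] using hlip u v
    exact this.continuous
  have hcontline : Continuous (fun t : ℝ => y + t • d) := by continuity
  have hcont2 : Continuous (fun t : ℝ => (inner ℝ (f' (y + t • d)) d : ℝ)) :=
    Continuous.inner (hcontf'.comp hcontline) continuous_const
  have hint : (∫ t in (0:ℝ)..1, (inner ℝ (f' (y + t • d)) d : ℝ))
      = f (y + (1:ℝ) • d) - f (y + (0:ℝ) • d) :=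
    intervalIntegral.integral_eq_sub_of_hasDerivAt
      (fun t _ => line_hasDerivAt f y d t (f' (y + t • d)) (hf _))
      (hcont2.intervalIntegrable 0 1)
  have hbound : ∀ t ∈ Set.Icc (0:ℝ) 1,
      (inner ℝ (f' (y + t • d)) d : ℝ) ≤ (inner ℝ (f' y) d : ℝ) + t * (L * ‖d‖ ^ 2) := by
    intro t ht
    have h1 : (inner ℝ (f' (y + t • d)) d : ℝ) - inner ℝ (f' y) d
        = inner ℝ (f' (y + t • d) - f' y) d := by rw [inner_sub_left]
    have h2 : (inner ℝ (f' (y + t • d) - f' y) d : ℝ) ≤ ‖f' (y + t • d) - f' y‖ * ‖d‖ :=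
      real_inner_le_norm _ _
    have h3 : ‖f' (y + t • d) - f' y‖ ≤ L * ‖t • d‖ := by
      simpa using hlip (y + t • d) y
    have h4 : ‖t • d‖ = t * ‖d‖ := by
      rw [norm_smul, Real.norm_eq_abs, abs_of_nonneg ht.1]
    have h5 : ‖f' (y + t • d) - f' y‖ * ‖d‖ ≤ (L * ‖t • d‖) * ‖d‖ :=
      mul_le_mul_of_nonneg_right h3 (norm_nonneg d)
    have h6 : (L * ‖t • d‖) * ‖d‖ = t * (L * ‖d‖ ^ 2) := by rw [h4]; ring
    linarith [h1, h2, h5]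
  have hcont3 : Continuous (fun t : ℝ => (inner ℝ (f' y) d : ℝ) + t * (L * ‖d‖ ^ 2)) := by
    continuity
  have hmono := intervalIntegral.integral_mono_on (μ := MeasureTheory.volume) (zero_le_one)
    (hcont2.intervalIntegrable 0 1) (hcont3.intervalIntegrable 0 1) hbound
  have hval : (∫ t in (0:ℝ)..1, ((inner ℝ (f' y) d : ℝ) + t * (L * ‖d‖ ^ 2)))
      = (inner ℝ (f' y) d : ℝ) + L / 2 * ‖d‖ ^ 2 := by
    have hig : IntervalIntegrable (fun t : ℝ => t * (L * ‖d‖ ^ 2)) MeasureTheory.volume 0 1 :=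
      (Continuous.intervalIntegrable (by continuity) 0 1)
    rw [intervalIntegral.integral_add intervalIntegrable_const hig,
      intervalIntegral.integral_const, intervalIntegral.integral_mul_const, integral_id]
    norm_num
    ring
  have hxy : y + (1:ℝ) • d = x := by rw [hd]; module
  have hyy : y + (0:ℝ) • d = y := by rw [hd]; module
  rw [hxy, hyy] at hint
  rw [hval] at hmono
  linarith [hint, hmono]

private lemma norm_combo (u v : E) (t : ℝ) :
    ‖u + t • (v - u)‖ ^ 2 = (1 - t) * ‖u‖ ^ 2 + t * ‖v‖ ^ 2 - t * (1 - t) * ‖u - v‖ ^ 2 := by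
  have h := norm_add_sq_real u (t • (v - u))
  have h1 : ‖u - v‖ ^ 2 = ‖u‖ ^ 2 - 2 * inner ℝ u v + ‖v‖ ^ 2 := norm_sub_sq_real u v
  have h2 : ‖v - u‖ ^ 2 = ‖u - v‖ ^ 2 := by rw [norm_sub_rev]
  have h3 : (inner ℝ u (v - u) : ℝ) = inner ℝ u v - ‖u‖ ^ 2 := by
    rw [inner_sub_right, real_inner_self_eq_norm_sq]
  have h4 : ‖t • (v - u)‖ ^ 2 = t ^ 2 * ‖v - u‖ ^ 2 := by
    rw [norm_smul, Real.norm_eq_abs, mul_pow, sq_abs]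
  rw [h, real_inner_smul_right, h3, h4, h2, h1]
  ring

end helpers

set_option maxHeartbeats 1600000 in
theorem stmt_19 (n m : ℕ) (hm : 0 < m) (L : ℝ) (hL : 0 < L)
    (f g : Fin m → EuclideanSpace ℝ (Fin n) → ℝ)
    (f' : Fin m → EuclideanSpace ℝ (Fin n) → EuclideanSpace ℝ (Fin n))
    (hf : ∀ i x, HasGradientAt (f i) (f' i x) x)
    (hfconv : ∀ i, ConvexOn ℝ Set.univ (f i))
    (hlip : ∀ i x y, ‖f' i x - f' i y‖ ≤ L * ‖x - y‖)
    (hg : ∀ i, ConvexOn ℝ Set.univ (g i))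
    (F : Fin m → EuclideanSpace ℝ (Fin n) → ℝ) (hF : ∀ i x, F i x = f i x + g i x)
    (s : ℝ) (hs0 : 0 < s) (hsL : s ≤ 1 / L)
    (xk yk x₁ : EuclideanSpace ℝ (Fin n))
    (φ : EuclideanSpace ℝ (Fin n) → ℝ)
    (hφ : ∀ z, φ z = (⨆ i : Fin m, ((inner ℝ (f' i yk) (z - yk) : ℝ) + g i z + f i yk - F i xk))
        + (1 / (2 * s)) * ‖z - yk‖ ^ 2)
    (hmin : ∀ w, φ x₁ ≤ φ w)
    (lam : Fin m → ℝ) (hlam : ∀ i, 0 ≤ lam i) (hlamsum : ∑ i, lam i = 1)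
    (gt : Fin m → EuclideanSpace ℝ (Fin n))
    (hsub : ∀ i w, g i x₁ + (inner ℝ (gt i) (w - x₁) : ℝ) ≤ g i w)
    (hkkt : ∑ i, lam i • (f' i yk + gt i) = -(1 / s) • (x₁ - yk))
    (hactive : ∀ j, ((inner ℝ (f' j yk) (x₁ - yk) : ℝ) + g j x₁ + f j yk - F j xk)
        ≠ (⨅ i : Fin m, ((inner ℝ (f' i yk) (x₁ - yk) : ℝ) + g i x₁ + f i yk - F i xk))
      → lam j = 0) :
    ∀ z : EuclideanSpace ℝ (Fin n),
      (⨅ i : Fin m, (F i xk - F i z)) - (⨅ i : Fin m, (F i x₁ - F i z)) ≥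
        -(1 / (2 * s)) * (2 * (inner ℝ (yk - x₁) (yk - xk) : ℝ) + ‖x₁ - yk‖ ^ 2) := by
  intro z
  haveI : Nonempty (Fin m) := ⟨⟨0, hm⟩⟩
  -- the linearized objective components
  set Θ : Fin m → EuclideanSpace ℝ (Fin n) → ℝ :=
    fun i w => (inner ℝ (f' i yk) (w - yk) : ℝ) + g i w + f i yk - F i xk with hΘ
  set ψ : EuclideanSpace ℝ (Fin n) → ℝ := fun w => ⨆ i : Fin m, Θ i w with hψ
  have hφψ : ∀ w, φ w = ψ w + (1 / (2 * s)) * ‖w - yk‖ ^ 2 := by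
    intro w
    rw [hφ w]
  have hbdd : ∀ w : EuclideanSpace ℝ (Fin n), BddAbove (Set.range fun i : Fin m => Θ i w) :=
    fun w => (Set.finite_range _).bddAbove
  have hs2 : 0 < 1 / (2 * s) := by positivity
  -- step size vs Lipschitz constant
  have hLs : L / 2 ≤ 1 / (2 * s) := by
    rw [div_le_div_iff₀ (by norm_num) (by positivity)]
    have h1 : s * L ≤ 1 := (le_div_iff₀ hL).1 hsL
    nlinarith
  -- descent lemma bound: F i x₁ ≤ F i xk + Θ i x₁ + 1/(2s)‖x₁ - yk‖²
  have h1 : ∀ i, F i x₁ ≤ F i xk + Θ i x₁ + (1 / (2 * s)) * ‖x₁ - yk‖ ^ 2 := by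
    intro i
    have hd := descent_lemma (f i) (f' i) L hL (hf i) (hlip i) x₁ yk
    have : L / 2 * ‖x₁ - yk‖ ^ 2 ≤ (1 / (2 * s)) * ‖x₁ - yk‖ ^ 2 := by
      apply mul_le_mul_of_nonneg_right hLs (by positivity)
    have hFx := hF i x₁
    simp only [hΘ]
    linarith [hd, hFx]
  -- ψ xk ≤ 0
  have hψxk : ψ xk ≤ 0 := by
    apply ciSup_le
    intro i
    have := convex_grad_ineq (f i) (f' i yk) yk xk (hfconv i) (hf i yk)
    have hFx := hF i xk
    simp only [hΘ]
    linarith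
  have hφxk : φ xk ≤ (1 / (2 * s)) * ‖xk - yk‖ ^ 2 := by
    rw [hφψ xk]; linarith
  -- strong convexity at the minimizer: φ x₁ + 1/(2s) ‖xk - x₁‖² ≤ φ xk
  set c : ℝ := (1 / (2 * s)) * ‖x₁ - xk‖ ^ 2 with hcdef
  have hc0 : 0 ≤ c := by positivity
  have hstep : ∀ t : ℝ, 0 < t → t ≤ 1 → φ x₁ + c ≤ φ xk + t * c := by
    intro t ht0 ht1
    set w := x₁ + t • (xk - x₁) with hw
    have hmw := hmin w
    -- convexity of ψ along the segment
    have hψw : ψ w ≤ (1 - t) * ψ x₁ + t * ψ xk := by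
      apply ciSup_le
      intro i
      have hcomb : w = (1 - t) • x₁ + t • xk := by rw [hw]; module
      have hgw : g i w ≤ (1 - t) * g i x₁ + t * g i xk := by
        rw [hcomb]
        simpa [smul_eq_mul] using
          (hg i).2 (Set.mem_univ x₁) (Set.mem_univ xk) (by linarith) ht0.le (by ring)
      have hinw : (inner ℝ (f' i yk) (w - yk) : ℝ)
          = (1 - t) * inner ℝ (f' i yk) (x₁ - yk) + t * inner ℝ (f' i yk) (xk - yk) := by
        have hwyk : w - yk = (1 - t) • (x₁ - yk) + t • (xk - yk) := by rw [hw]; module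
        rw [hwyk, inner_add_right, real_inner_smul_right, real_inner_smul_right]
      have hΘ1 : Θ i x₁ ≤ ψ x₁ := le_ciSup (hbdd x₁) i
      have hΘ2 : Θ i xk ≤ ψ xk := le_ciSup (hbdd xk) i
      have : Θ i w ≤ (1 - t) * Θ i x₁ + t * Θ i xk := by
        simp only [hΘ] at *
        rw [hinw]
        nlinarith [hgw]
      nlinarith [hΘ1, hΘ2, this, ht0.le, (by linarith : (0:ℝ) ≤ 1 - t)]
    -- quadratic identity
    have hquad : ‖w - yk‖ ^ 2
        = (1 - t) * ‖x₁ - yk‖ ^ 2 + t * ‖xk - yk‖ ^ 2 - t * (1 - t) * ‖x₁ - xk‖ ^ 2 := by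
      have hrw : w - yk = (x₁ - yk) + t • ((xk - yk) - (x₁ - yk)) := by rw [hw]; module
      have := norm_combo (x₁ - yk) (xk - yk) t
      rw [hrw, this]
      have : (x₁ - yk) - (xk - yk) = x₁ - xk := by abel
      rw [this]
    have hφw : φ w = ψ w + (1 / (2 * s)) * ‖w - yk‖ ^ 2 := hφψ w
    have hφ1 : φ x₁ = ψ x₁ + (1 / (2 * s)) * ‖x₁ - yk‖ ^ 2 := hφψ x₁
    have hφ2 : φ xk = ψ xk + (1 / (2 * s)) * ‖xk - yk‖ ^ 2 := hφψ xk
    -- φ x₁ ≤ (1-t) φ x₁ + t φ xk - t(1-t) c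
    have h0 : φ x₁ ≤ ψ w + (1 / (2 * s)) * ‖w - yk‖ ^ 2 := le_of_le_of_eq hmw hφw
    rw [hquad] at h0
    have h0' : φ x₁ ≤ (1 - t) * ψ x₁ + t * ψ xk + (1 / (2 * s)) *
        ((1 - t) * ‖x₁ - yk‖ ^ 2 + t * ‖xk - yk‖ ^ 2 - t * (1 - t) * ‖x₁ - xk‖ ^ 2) := by
      linarith [hψw, h0]
    have hkey : φ x₁ ≤ (1 - t) * φ x₁ + t * φ xk - t * (1 - t) * c := by
      rw [hφ1, hφ2, hcdef]
      rw [hφ1] at h0'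
      linarith [h0']
    have h' : t * (φ x₁ + c) ≤ t * (φ xk + t * c) := by nlinarith [hkey]
    exact le_of_mul_le_mul_left h' ht0
  have hstrong : φ x₁ + c ≤ φ xk := by
    apply le_of_forall_sub_le
    intro ε hε
    rcases le_or_gt c 0 with hcz | hcz
    · have := hstep 1 one_pos le_rfl
      have hcc : c = 0 := le_antisymm hcz hc0
      rw [hcc] at this ⊢
      linarith
    · set t : ℝ := min 1 (ε / c) with htdef
      have ht0 : 0 < t := lt_min one_pos (div_pos hε hcz)
      have ht1 : t ≤ 1 := min_le_left _ _
      have htc : t * c ≤ ε := by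
        have : t ≤ ε / c := min_le_right _ _
        calc t * c ≤ (ε / c) * c := by nlinarith
          _ = ε := by field_simp
      have := hstep t ht0 ht1
      linarith
  -- bound on each Θ i x₁
  have h2 : ∀ i, Θ i x₁ ≤ (1 / (2 * s)) * (‖xk - yk‖ ^ 2 - ‖x₁ - yk‖ ^ 2 - ‖x₁ - xk‖ ^ 2) := by
    intro i
    have hΘ1 : Θ i x₁ ≤ ψ x₁ := le_ciSup (hbdd x₁) i
    have hφ1 : φ x₁ = ψ x₁ + (1 / (2 * s)) * ‖x₁ - yk‖ ^ 2 := hφψ x₁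
    have : ψ x₁ ≤ (1 / (2 * s)) * ‖xk - yk‖ ^ 2 - c - (1 / (2 * s)) * ‖x₁ - yk‖ ^ 2 := by
      linarith [hstrong, hφxk]
    rw [hcdef] at this
    calc Θ i x₁ ≤ ψ x₁ := hΘ1
      _ ≤ (1 / (2 * s)) * ‖xk - yk‖ ^ 2 - (1 / (2 * s)) * ‖x₁ - xk‖ ^ 2
          - (1 / (2 * s)) * ‖x₁ - yk‖ ^ 2 := by linarith
      _ = _ := by ring
  -- the inner ℝ product identity
  have hid : 2 * (inner ℝ (yk - x₁) (yk - xk) : ℝ)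
      = ‖yk - x₁‖ ^ 2 + ‖yk - xk‖ ^ 2 - ‖x₁ - xk‖ ^ 2 := by
    have h := norm_sub_sq_real (yk - x₁) (yk - xk)
    have hrw : (yk - x₁) - (yk - xk) = xk - x₁ := by abel
    rw [hrw] at h
    have : ‖xk - x₁‖ = ‖x₁ - xk‖ := norm_sub_rev _ _
    rw [this] at h
    linarith
  have hn1 : ‖yk - x₁‖ = ‖x₁ - yk‖ := norm_sub_rev _ _
  have hn2 : ‖yk - xk‖ = ‖xk - yk‖ := norm_sub_rev _ _
  set R : ℝ := (1 / (2 * s)) * (2 * (inner ℝ (yk - x₁) (yk - xk) : ℝ) + ‖x₁ - yk‖ ^ 2) with hR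
  -- per-index bound: F i x₁ - F i z ≤ (F i xk - F i z) + R
  have h3 : ∀ i, F i x₁ - F i z ≤ (F i xk - F i z) + R := by
    intro i
    have hA := h1 i
    have hB := h2 i
    have hRge : (1 / (2 * s)) * (‖xk - yk‖ ^ 2 - ‖x₁ - yk‖ ^ 2 - ‖x₁ - xk‖ ^ 2)
        + (1 / (2 * s)) * ‖x₁ - yk‖ ^ 2 ≤ R := by
      rw [hR, hid, hn1, hn2]
      have hnn : 0 ≤ ‖x₁ - yk‖ ^ 2 := by positivity
      nlinarith [hs2]
    linarith
  -- conclude via a minimizing index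
  obtain ⟨j, hj⟩ := Finite.exists_min (fun i : Fin m => F i xk - F i z)
  have hinf1 : F j xk - F j z ≤ ⨅ i : Fin m, (F i xk - F i z) := le_ciInf hj
  have hinf2 : (⨅ i : Fin m, (F i x₁ - F i z)) ≤ F j x₁ - F j z :=
    ciInf_le ((Set.finite_range _).bddBelow) j
  have := h3 j
  have hgoal : (⨅ i : Fin m, (F i xk - F i z)) - (⨅ i : Fin m, (F i x₁ - F i z)) ≥ -R := by
    linarith
  rw [hR] at hgoal
  linarith [hgoal]
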